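/- Let (Ω, F, P) be a probability space with a filtration (F_n)_{n ∈ ℕ}, let d ≥ 1, L > 0, T > 0, C₀ > 0, let δ ∈ (0, 1] and N ∈ ℕ with N·δ ≤ T. Let ξ₀ be an F₀-measurable ℝ^d-valued random variable with E‖ξ₀‖² ≤ C₀, and for 1 ≤ k ≤ N let α_k be F_k-measurable, square-integrable ℝ^d-valued random variables; set ξ_n := ξ₀ + Σ_{k=1}^n α_k. Assume that almost surely, for every 1 ≤ k ≤ N: ‖E[α_k | F_{k−1}]‖ ≤ δ L (1 + ‖ξ_{k−1}‖) and E[‖α_k‖² | F_{k−1}] ≤ δ L (1 + ‖ξ_{k−1}‖²). Then there exists a constant k, depending only on L, T and C₀ (and not on δ or N), such that E‖ξ_n − ξ_m‖² ≤ k · δ · (n − m) for all 0 ≤ m ≤ n ≤ N. -/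

import Mathlib

open MeasureTheory Filter Finset

section Aux
variable {Ω : Type} {m : MeasurableSpace Ω} {m0 : MeasurableSpace Ω} {P : Measure Ω}

/-- conditional expectation commutes with a continuous linear map. -/
lemma condexp_clm_comm [IsFiniteMeasure P] (hm : m ≤ m0)
    {E F : Type} [NormedAddCommGroup E] [NormedSpace ℝ E] [CompleteSpace E]
    [NormedAddCommGroup F] [NormedSpace ℝ F] [CompleteSpace F]
    (T : E →L[ℝ] F) {f : Ω → E} (hf : Integrable f P) :
    (fun ω => T ((P[f|m]) ω)) =ᵐ[P] P[fun ω => T (f ω)|m] := by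
  refine ae_eq_condExp_of_forall_setIntegral_eq hm (T.integrable_comp hf)
    (fun s _ _ => (T.integrable_comp integrable_condExp).integrableOn)
    (fun s hs _ => ?_)
    ((T.continuous.comp_stronglyMeasurable stronglyMeasurable_condExp).aestronglyMeasurable)
  rw [T.integral_comp_comm integrable_condExp.integrableOn,
    setIntegral_condExp hm hf hs, ← T.integral_comp_comm hf.integrableOn]

end Aux

section Aux2
variable {Ω : Type} {m : MeasurableSpace Ω} {m0 : MeasurableSpace Ω} {P : Measure Ω}

lemma coord_abs_le_norm {d : ℕ} (x : EuclideanSpace ℝ (Fin d)) (i : Fin d) : |x i| ≤ ‖x‖ := by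
  rw [EuclideanSpace.norm_eq]
  have h1 : |x i| = Real.sqrt ((x i)^2) := by rw [Real.sqrt_sq_eq_abs]
  rw [h1]
  apply Real.sqrt_le_sqrt
  have := Finset.single_le_sum (f := fun j => (x j)^2) (fun j _ => sq_nonneg (x j))
    (Finset.mem_univ i)
  simpa [sq_abs] using this

/-- product of two L² functions (one against a norm bound) is integrable -/
lemma integrable_mul_of_memL2 {f g : Ω → ℝ} (hf : MemLp f 2 P) (hg : MemLp g 2 P) :
    Integrable (fun ω => f ω * g ω) P := by
  have h1 : Integrable (fun ω => f ω ^ 2) P := hf.integrable_sq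
  have h2 : Integrable (fun ω => g ω ^ 2) P := hg.integrable_sq
  refine Integrable.mono' ((h1.add h2).const_mul (1/2 : ℝ)) (hf.1.mul hg.1) ?_
  filter_upwards with ω
  have : |f ω * g ω| ≤ 1/2 * ((f ω)^2 + (g ω)^2) := by
    rw [abs_mul]
    nlinarith [sq_nonneg (|f ω| - |g ω|), sq_abs (f ω), sq_abs (g ω), abs_nonneg (f ω),
      abs_nonneg (g ω)]
  rw [Real.norm_eq_abs]
  calc |f ω * g ω| ≤ 1/2 * ((f ω)^2 + (g ω)^2) := this
    _ ≤ 1/2 * ((f ω)^2 + (g ω)^2) := le_rfl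

local notation "⟪" x ", " y "⟫" => @inner ℝ _ _ x y

lemma integrable_inner_of_memL2 {d : ℕ} {X Y : Ω → EuclideanSpace ℝ (Fin d)}
    (hX : MemLp X 2 P) (hY : MemLp Y 2 P) :
    Integrable (fun ω => ⟪X ω, Y ω⟫) P := by
  have h1 : Integrable (fun ω => ‖X ω‖ * ‖Y ω‖) P :=
    integrable_mul_of_memL2 hX.norm hY.norm
  refine h1.mono' (hX.1.inner hY.1) ?_
  filter_upwards with ω
  have := abs_real_inner_le_norm (X ω) (Y ω)
  rw [Real.norm_eq_abs]
  exact this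
  
/-- the pull-out property at the level of integrals of inner products. -/
lemma integral_inner_condexp [IsProbabilityMeasure P] (hm : m ≤ m0) {d : ℕ}
    {X A : Ω → EuclideanSpace ℝ (Fin d)}
    (hXm : StronglyMeasurable[m] X) (hX : MemLp X 2 P) (hA : MemLp A 2 P) :
    ∫ ω, ⟪X ω, A ω⟫ ∂P = ∫ ω, ⟪X ω, (P[A|m]) ω⟫ ∂P := by
  have hAint : Integrable A P := hA.integrable one_le_two
  have hXi : ∀ i : Fin d, MemLp (fun ω => X ω i) 2 P := fun i => by
    have := (EuclideanSpace.proj (𝕜 := ℝ) i).comp_memLp' hX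
    exact this
  have hAi : ∀ i : Fin d, MemLp (fun ω => A ω i) 2 P := fun i => by
    have := (EuclideanSpace.proj (𝕜 := ℝ) i).comp_memLp' hA
    exact this
  have hXim : ∀ i : Fin d, StronglyMeasurable[m] (fun ω => X ω i) := fun i =>
    (EuclideanSpace.proj (𝕜 := ℝ) i).continuous.comp_stronglyMeasurable hXm
  -- coordinate equality of integrals
  have key : ∀ i : Fin d,
      ∫ ω, X ω i * A ω i ∂P = ∫ ω, X ω i * (P[A|m]) ω i ∂P := by
    intro i
    have hprod : Integrable (fun ω => X ω i * A ω i) P :=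
      integrable_mul_of_memL2 (hXi i) (hAi i)
    have hmul := condExp_mul_of_stronglyMeasurable_left (μ := P) (m := m) (hXim i) hprod
      ((hAi i).integrable one_le_two)
    have hproj := condexp_clm_comm (P := P) hm (EuclideanSpace.proj (𝕜 := ℝ) i) hAint
    calc ∫ ω, X ω i * A ω i ∂P
        = ∫ ω, (P[fun ω => X ω i * A ω i|m]) ω ∂P := (integral_condExp hm).symm
      _ = ∫ ω, X ω i * (P[fun ω => A ω i|m]) ω ∂P := integral_congr_ae (by
            filter_upwards [hmul] with ω hω using hω)
      _ = ∫ ω, X ω i * (P[A|m]) ω i ∂P := integral_congr_ae (by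
            filter_upwards [hproj] with ω hω
            exact congrArg (fun t => X ω i * t) hω.symm)
  -- integrability of coordinate products on the condexp side
  have hprodc : ∀ i : Fin d, Integrable (fun ω => X ω i * (P[A|m]) ω i) P := by
    intro i
    have hmul := condExp_mul_of_stronglyMeasurable_left (μ := P) (m := m) (hXim i)
      (integrable_mul_of_memL2 (hXi i) (hAi i)) ((hAi i).integrable one_le_two)
    have hproj := condexp_clm_comm (P := P) hm (EuclideanSpace.proj (𝕜 := ℝ) i) hAint
    refine (integrable_condExp (m := m) (f := fun ω => X ω i * A ω i)).congr ?_
    filter_upwards [hmul, hproj] with ω h1 h2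
    calc (P[fun ω => X ω i * A ω i|m]) ω
        = ((fun ω => X ω i) * P[fun ω => A ω i|m]) ω := h1
      _ = X ω i * (P[A|m]) ω i := by
          rw [Pi.mul_apply]
          exact congrArg (fun t => X ω i * t) h2.symm
  have hinner : ∀ (Y : Ω → EuclideanSpace ℝ (Fin d)) (ω : Ω),
      ⟪X ω, Y ω⟫ = ∑ i : Fin d, X ω i * Y ω i := by
    intro Y ω
    simp [PiLp.inner_apply, RCLike.inner_apply, mul_comm]
  calc ∫ ω, ⟪X ω, A ω⟫ ∂P = ∫ ω, ∑ i : Fin d, X ω i * A ω i ∂P := by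
        simp_rw [hinner]
    _ = ∑ i : Fin d, ∫ ω, X ω i * A ω i ∂P :=
        integral_finset_sum _ (fun i _ => integrable_mul_of_memL2 (hXi i) (hAi i))
    _ = ∑ i : Fin d, ∫ ω, X ω i * (P[A|m]) ω i ∂P := by
        exact Finset.sum_congr rfl (fun i _ => key i)
    _ = ∫ ω, ∑ i : Fin d, X ω i * (P[A|m]) ω i ∂P :=
        (integral_finset_sum _ (fun i _ => hprodc i)).symm
    _ = ∫ ω, ⟪X ω, (P[A|m]) ω⟫ ∂P := by simp_rw [hinner]

end Aux2

section Aux3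
variable {Ω : Type} {m : MeasurableSpace Ω} {m0 : MeasurableSpace Ω} {P : Measure Ω}

local notation "⟪" x ", " y "⟫" => @inner ℝ _ _ x y

lemma step_expand [IsProbabilityMeasure P] (hm : m ≤ m0) {d : ℕ}
    {X A : Ω → EuclideanSpace ℝ (Fin d)}
    (hXm : StronglyMeasurable[m] X) (hX : MemLp X 2 P) (hA : MemLp A 2 P) :
    ∫ ω, ‖X ω + A ω‖^2 ∂P = (∫ ω, ‖X ω‖^2 ∂P)
      + 2 * ∫ ω, ⟪X ω, (P[A|m]) ω⟫ ∂P + ∫ ω, ‖A ω‖^2 ∂P := by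
  have hB : Integrable (fun ω => ‖X ω‖^2) P := (memLp_two_iff_integrable_sq_norm hX.1).mp hX
  have hA2 : Integrable (fun ω => ‖A ω‖^2) P := (memLp_two_iff_integrable_sq_norm hA.1).mp hA
  have hI : Integrable (fun ω => ⟪X ω, A ω⟫) P := integrable_inner_of_memL2 hX hA
  have h1 : ∀ ω, ‖X ω + A ω‖^2 = ‖X ω‖^2 + 2 * ⟪X ω, A ω⟫ + ‖A ω‖^2 :=
    fun ω => norm_add_sq_real (X ω) (A ω)
  calc ∫ ω, ‖X ω + A ω‖^2 ∂P
      = ∫ ω, (‖X ω‖^2 + 2 * ⟪X ω, A ω⟫ + ‖A ω‖^2) ∂P := by simp_rw [h1]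
    _ = (∫ ω, ‖X ω‖^2 ∂P) + 2 * (∫ ω, ⟪X ω, A ω⟫ ∂P) + ∫ ω, ‖A ω‖^2 ∂P := by
        have i1 : Integrable (fun ω => ‖X ω‖^2 + 2 * ⟪X ω, A ω⟫) P := hB.add (hI.const_mul 2)
        rw [integral_add i1 hA2, integral_add hB (hI.const_mul 2), integral_const_mul]
    _ = (∫ ω, ‖X ω‖^2 ∂P) + 2 * ∫ ω, ⟪X ω, (P[A|m]) ω⟫ ∂P + ∫ ω, ‖A ω‖^2 ∂P := by
        rw [integral_inner_condexp hm hXm hX hA]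

lemma onestep [IsProbabilityMeasure P] (hm : m ≤ m0) {d : ℕ}
    {X A W : Ω → EuclideanSpace ℝ (Fin d)} {δ L : ℝ} (hδL : 0 < δ * L)
    (hXm : StronglyMeasurable[m] X) (hX : MemLp X 2 P) (hA : MemLp A 2 P) (hW : MemLp W 2 P)
    (hdr : ∀ᵐ ω ∂P, ‖(P[A|m]) ω‖ ≤ δ * L * (1 + ‖W ω‖))
    (hs2 : ∀ᵐ ω ∂P, (P[fun ω' => ‖A ω'‖^2|m]) ω ≤ δ * L * (1 + ‖W ω‖^2)) :
    ∫ ω, ‖X ω + A ω‖^2 ∂P ≤ (∫ ω, ‖X ω‖^2 ∂P)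
      + δ * L * ((∫ ω, ‖X ω‖^2 ∂P) + 3 + 3 * ∫ ω, ‖W ω‖^2 ∂P) := by
  have hB : Integrable (fun ω => ‖X ω‖^2) P := (memLp_two_iff_integrable_sq_norm hX.1).mp hX
  have hA2 : Integrable (fun ω => ‖A ω‖^2) P := (memLp_two_iff_integrable_sq_norm hA.1).mp hA
  have hW2 : Integrable (fun ω => ‖W ω‖^2) P := (memLp_two_iff_integrable_sq_norm hW.1).mp hW
  set E : Ω → EuclideanSpace ℝ (Fin d) := P[A|m] with hE
  have hg : Integrable (fun ω => δ * L * (1/2 * ‖X ω‖^2 + 1 + ‖W ω‖^2)) P :=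
    (((hB.const_mul (1/2)).add (integrable_const 1)).add hW2).const_mul (δ * L)
  have habs : ∀ᵐ ω ∂P, |⟪X ω, E ω⟫| ≤ δ * L * (1/2 * ‖X ω‖^2 + 1 + ‖W ω‖^2) := by
    filter_upwards [hdr] with ω h
    have h1 : |⟪X ω, E ω⟫| ≤ ‖X ω‖ * ‖E ω‖ := abs_real_inner_le_norm _ _
    have h2 : ‖X ω‖ * ‖E ω‖ ≤ ‖X ω‖ * (δ * L * (1 + ‖W ω‖)) :=
      mul_le_mul_of_nonneg_left h (norm_nonneg _)
    have h3 : ‖X ω‖ * (1 + ‖W ω‖) ≤ 1/2 * ‖X ω‖^2 + 1 + ‖W ω‖^2 := by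
      nlinarith [sq_nonneg (‖X ω‖ - 1 - ‖W ω‖), sq_nonneg (‖W ω‖ - 1)]
    calc |⟪X ω, E ω⟫| ≤ ‖X ω‖ * (δ * L * (1 + ‖W ω‖)) := h1.trans h2
      _ = δ * L * (‖X ω‖ * (1 + ‖W ω‖)) := by ring
      _ ≤ δ * L * (1/2 * ‖X ω‖^2 + 1 + ‖W ω‖^2) := mul_le_mul_of_nonneg_left h3 hδL.le
  have hEmeas : AEStronglyMeasurable (fun ω => ⟪X ω, E ω⟫) P :=
    (hX.aestronglyMeasurable).inner (integrable_condExp).1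
  have hEint : Integrable (fun ω => ⟪X ω, E ω⟫) P := by
    refine hg.mono' hEmeas ?_
    filter_upwards [habs] with ω h
    rwa [Real.norm_eq_abs]
  have hIle : (∫ ω, ⟪X ω, E ω⟫ ∂P) ≤ δ * L * (1/2 * (∫ ω, ‖X ω‖^2 ∂P) + 1 + ∫ ω, ‖W ω‖^2 ∂P) := by
    calc (∫ ω, ⟪X ω, E ω⟫ ∂P) ≤ ∫ ω, δ * L * (1/2 * ‖X ω‖^2 + 1 + ‖W ω‖^2) ∂P := by
          refine integral_mono_ae hEint hg ?_
          filter_upwards [habs] with ω h using (le_abs_self _).trans h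
      _ = δ * L * (1/2 * (∫ ω, ‖X ω‖^2 ∂P) + 1 + ∫ ω, ‖W ω‖^2 ∂P) := by
          have i1 : Integrable (fun ω => 1/2 * ‖X ω‖^2 + 1) P :=
            (hB.const_mul (1/2)).add (integrable_const 1)
          rw [integral_const_mul, integral_add i1 hW2, integral_add (hB.const_mul (1/2))
            (integrable_const 1), integral_const_mul, integral_const]
          simp
  have hA2le : (∫ ω, ‖A ω‖^2 ∂P) ≤ δ * L * (1 + ∫ ω, ‖W ω‖^2 ∂P) := by
    calc (∫ ω, ‖A ω‖^2 ∂P) = ∫ ω, (P[fun ω' => ‖A ω'‖^2|m]) ω ∂P :=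
          (integral_condExp hm).symm
      _ ≤ ∫ ω, δ * L * (1 + ‖W ω‖^2) ∂P :=
          integral_mono_ae integrable_condExp
            (((integrable_const 1).add hW2).const_mul (δ * L)) hs2
      _ = δ * L * (1 + ∫ ω, ‖W ω‖^2 ∂P) := by
          rw [integral_const_mul, integral_add (integrable_const 1) hW2, integral_const]
          simp
  calc ∫ ω, ‖X ω + A ω‖^2 ∂P
      = (∫ ω, ‖X ω‖^2 ∂P) + 2 * ∫ ω, ⟪X ω, E ω⟫ ∂P + ∫ ω, ‖A ω‖^2 ∂P :=
        step_expand hm hXm hX hA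
    _ ≤ (∫ ω, ‖X ω‖^2 ∂P)
        + δ * L * ((∫ ω, ‖X ω‖^2 ∂P) + 3 + 3 * ∫ ω, ‖W ω‖^2 ∂P) := by nlinarith [hIle, hA2le]

end Aux3
set_option maxHeartbeats 2000000 in
/-- discrete-time core of Lemma 2 of the paper.
Under the conditional drift bound `‖E[α_k | F_{k-1}]‖ ≤ δL(1 + ‖ξ_{k-1}‖)` and conditional
second-moment bound `E[‖α_k‖² | F_{k-1}] ≤ δL(1 + ‖ξ_{k-1}‖²)` for the partial sums
`ξ_n = ξ₀ + Σ_{k=1}^n α_k`, with `Nδ ≤ T` and `E‖ξ₀‖² ≤ C₀`, there is a constant `k`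
depending only on `L`, `T`, `C₀` such that `E‖ξ_n − ξ_m‖² ≤ k·δ·(n − m)` for all
`0 ≤ m ≤ n ≤ N`. -/
theorem increment_second_moment_bound
    (d : ℕ) (hd : 1 ≤ d) (L T C₀ : ℝ) (hL : 0 < L) (hT : 0 < T) (hC₀ : 0 < C₀) :
    ∃ k : ℝ, 0 < k ∧
      ∀ (Ω : Type) [m0 : MeasurableSpace Ω] (P : Measure Ω), IsProbabilityMeasure P →
      ∀ (F : Filtration ℕ m0) (δ : ℝ) (N : ℕ)
        (ξ₀ : Ω → EuclideanSpace ℝ (Fin d))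
        (α : ℕ → Ω → EuclideanSpace ℝ (Fin d))
        (ξ : ℕ → Ω → EuclideanSpace ℝ (Fin d)),
        0 < δ → δ ≤ 1 → (N : ℝ) * δ ≤ T →
        StronglyMeasurable[F 0] ξ₀ →
        (∫⁻ ω, ENNReal.ofReal (‖ξ₀ ω‖ ^ 2) ∂P) ≤ ENNReal.ofReal C₀ →
        (∀ j, 1 ≤ j → j ≤ N → StronglyMeasurable[F j] (α j)) →
        (∀ j, 1 ≤ j → j ≤ N → MemLp (α j) 2 P) →
        (∀ n ω, ξ n ω = ξ₀ ω + ∑ j ∈ Finset.Icc 1 n, α j ω) →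
        (∀ᵐ ω ∂P, ∀ j, 1 ≤ j → j ≤ N →
          ‖(P[α j | F (j - 1)]) ω‖ ≤ δ * L * (1 + ‖ξ (j - 1) ω‖)) →
        (∀ᵐ ω ∂P, ∀ j, 1 ≤ j → j ≤ N →
          (P[fun ω' => ‖α j ω'‖ ^ 2 | F (j - 1)]) ω ≤ δ * L * (1 + ‖ξ (j - 1) ω‖ ^ 2)) →
        ∀ m n : ℕ, m ≤ n → n ≤ N →
          (∫⁻ ω, ENNReal.ofReal (‖ξ n ω - ξ m ω‖ ^ 2) ∂P)
            ≤ ENNReal.ofReal (k * δ * ((n : ℝ) - (m : ℝ))) := by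
  set C₁ : ℝ := (C₀ + 3 * L * T) * Real.exp (5 * L * T) with hC₁def
  have hC₁pos : 0 < C₁ := by positivity
  refine ⟨3 * L * (1 + C₁) * Real.exp (L * T), by positivity, ?_⟩
  intro Ω m0 P hP F δ N ξ₀ α ξ hδ hδ1 hNδ hξ₀m hξ₀C hαm hαL2 hξdef hdrift hsq2 m n hmn hnN
  haveI := hP
  have hδL : 0 < δ * L := mul_pos hδ hL
  -- basic measurability / integrability of ξ₀
  have hξ₀sm : AEStronglyMeasurable ξ₀ P := (hξ₀m.mono (F.le 0)).aestronglyMeasurable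
  have hnn : ∀ ω, (0:ℝ) ≤ ‖ξ₀ ω‖ ^ 2 := fun ω => sq_nonneg _
  have hsqm : AEStronglyMeasurable (fun ω => ‖ξ₀ ω‖ ^ 2) P := by
    have : AEStronglyMeasurable (fun ω => ‖ξ₀ ω‖) P := hξ₀sm.norm
    exact this.pow 2
  have hξ₀sq : Integrable (fun ω => ‖ξ₀ ω‖ ^ 2) P := by
    refine ⟨hsqm, ?_⟩
    rw [hasFiniteIntegral_iff_ofReal (Eventually.of_forall hnn)]
    exact lt_of_le_of_lt hξ₀C ENNReal.ofReal_lt_top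
  have hξ₀L2 : MemLp ξ₀ 2 P := (memLp_two_iff_integrable_sq_norm hξ₀sm).mpr hξ₀sq
  have hv0 : ∫ ω, ‖ξ₀ ω‖ ^ 2 ∂P ≤ C₀ := by
    rw [integral_eq_lintegral_of_nonneg_ae (Eventually.of_forall hnn) hsqm]
    calc (∫⁻ ω, ENNReal.ofReal (‖ξ₀ ω‖ ^ 2) ∂P).toReal
        ≤ (ENNReal.ofReal C₀).toReal := ENNReal.toReal_mono ENNReal.ofReal_ne_top hξ₀C
      _ = C₀ := ENNReal.toReal_ofReal hC₀.le
  -- ξ n is in L² and F n - measurable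
  have hmemξ : ∀ p, p ≤ N → MemLp (ξ p) 2 P := by
    intro p hp
    have he : ξ p = fun ω => ξ₀ ω + ∑ j ∈ Finset.Icc 1 p, α j ω := funext (hξdef p)
    rw [he]
    refine hξ₀L2.add (memLp_finset_sum _ fun j hj => ?_)
    have hj' := Finset.mem_Icc.mp hj
    exact hαL2 j hj'.1 (hj'.2.trans hp)
  have hSMξ : ∀ p, p ≤ N → StronglyMeasurable[F p] (ξ p) := by
    intro p hp
    have he : ξ p = fun ω => ξ₀ ω + ∑ j ∈ Finset.Icc 1 p, α j ω := funext (hξdef p)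
    rw [he]
    refine StronglyMeasurable.add (hξ₀m.mono (F.mono (Nat.zero_le p))) ?_
    refine Finset.stronglyMeasurable_fun_sum _ fun j hj => ?_
    have hj' := Finset.mem_Icc.mp hj
    exact (hαm j hj'.1 (hj'.2.trans hp)).mono (F.mono hj'.2)
  have hstep : ∀ p, p < N → ∀ ω, ξ (p+1) ω = ξ p ω + α (p+1) ω := by
    intro p hp ω
    rw [hξdef (p+1) ω, hξdef p ω, Finset.sum_Icc_succ_top (by omega : 1 ≤ p + 1), add_assoc]
  have hsqInt : ∀ p, p ≤ N → Integrable (fun ω => ‖ξ p ω‖ ^ 2) P := fun p hp =>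
    (memLp_two_iff_integrable_sq_norm (hmemξ p hp).1).mp (hmemξ p hp)
  -- drift / second moment bounds at step p+1 in a.e. form
  have hdr' : ∀ p, p < N → ∀ᵐ ω ∂P, ‖(P[α (p+1)|F p]) ω‖ ≤ δ * L * (1 + ‖ξ p ω‖) := by
    intro p hp
    filter_upwards [hdrift] with ω hω
    simpa using hω (p+1) (by omega) (by omega)
  have hs2' : ∀ p, p < N →
      ∀ᵐ ω ∂P, (P[fun ω' => ‖α (p+1) ω'‖ ^ 2|F p]) ω ≤ δ * L * (1 + ‖ξ p ω‖ ^ 2) := by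
    intro p hp
    filter_upwards [hsq2] with ω hω
    simpa using hω (p+1) (by omega) (by omega)
  -- the v recursion and uniform bound
  have hvstep : ∀ p, p < N → ∫ ω, ‖ξ (p+1) ω‖ ^ 2 ∂P
      ≤ (∫ ω, ‖ξ p ω‖ ^ 2 ∂P) * (1 + 4 * (δ * L)) + 3 * (δ * L) := by
    intro p hp
    have hXL2 := hmemξ p hp.le
    have h1 : ∫ ω, ‖ξ (p+1) ω‖ ^ 2 ∂P = ∫ ω, ‖ξ p ω + α (p+1) ω‖ ^ 2 ∂P := by
      refine integral_congr_ae (Eventually.of_forall fun ω => ?_)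
      show ‖ξ (p+1) ω‖ ^ 2 = ‖ξ p ω + α (p+1) ω‖ ^ 2
      rw [hstep p hp ω]
    have h2 := onestep (P := P) (F.le p) hδL (hSMξ p hp.le) hXL2
      (hαL2 (p+1) (by omega) (by omega)) hXL2 (hdr' p hp) (hs2' p hp)
    rw [h1]
    calc ∫ ω, ‖ξ p ω + α (p+1) ω‖ ^ 2 ∂P
        ≤ (∫ ω, ‖ξ p ω‖ ^ 2 ∂P)
          + δ * L * ((∫ ω, ‖ξ p ω‖ ^ 2 ∂P) + 3 + 3 * ∫ ω, ‖ξ p ω‖ ^ 2 ∂P) := h2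
      _ = (∫ ω, ‖ξ p ω‖ ^ 2 ∂P) * (1 + 4 * (δ * L)) + 3 * (δ * L) := by ring
  have hvint_nonneg : ∀ p, 0 ≤ ∫ ω, ‖ξ p ω‖ ^ 2 ∂P := fun p =>
    integral_nonneg fun ω => sq_nonneg _
  have hgron : ∀ p, p ≤ N →
      ∫ ω, ‖ξ p ω‖ ^ 2 ∂P ≤ (C₀ + 3 * (δ * L) * p) * (1 + 4 * (δ * L)) ^ p := by
    intro p
    induction p with
    | zero =>
      intro _
      have : ∫ ω, ‖ξ 0 ω‖ ^ 2 ∂P = ∫ ω, ‖ξ₀ ω‖ ^ 2 ∂P := by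
        refine integral_congr_ae (Eventually.of_forall fun ω => ?_)
        show ‖ξ 0 ω‖ ^ 2 = ‖ξ₀ ω‖ ^ 2
        rw [hξdef 0 ω]; simp
      rw [this]; simpa using hv0
    | succ p ih =>
      intro hp
      have hp' : p < N := by omega
      have h1 := hvstep p hp'
      have h2 := ih hp'.le
      have hpow : (1:ℝ) ≤ (1 + 4 * (δ * L)) ^ p := one_le_pow₀ (by nlinarith)
      have hδLp : 0 ≤ 3 * (δ * L) * p := by positivity
      calc ∫ ω, ‖ξ (p+1) ω‖ ^ 2 ∂P
          ≤ (∫ ω, ‖ξ p ω‖ ^ 2 ∂P) * (1 + 4 * (δ * L)) + 3 * (δ * L) := h1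
        _ ≤ ((C₀ + 3 * (δ * L) * p) * (1 + 4 * (δ * L)) ^ p) * (1 + 4 * (δ * L))
            + 3 * (δ * L) := by nlinarith
        _ ≤ (C₀ + 3 * (δ * L) * (p+1)) * (1 + 4 * (δ * L)) ^ (p+1) := by
            rw [pow_succ]
            have hXa : (1:ℝ) ≤ (1 + 4 * (δ * L)) ^ p * (1 + 4 * (δ * L)) := by nlinarith
            nlinarith [pow_nonneg (by nlinarith : (0:ℝ) ≤ 1 + 4 * (δ * L)) p]
        _ = (C₀ + 3 * (δ * L) * ((p:ℕ)+1 : ℕ)) * (1 + 4 * (δ * L)) ^ (p+1) := by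
            push_cast; ring
  -- exponential bounds
  have hexp_pow : ∀ (a : ℝ) (p : ℕ), 0 ≤ a → (p:ℝ) * a ≤ L * T * 5 →
      (1 + a) ^ p ≤ Real.exp (5 * L * T) := by
    intro a p ha hpa
    calc (1 + a) ^ p ≤ (Real.exp a) ^ p := by
          refine pow_le_pow_left₀ (by nlinarith) ?_ p
          linarith [Real.add_one_le_exp a]
      _ = Real.exp (p * a) := by rw [← Real.exp_nat_mul]
      _ ≤ Real.exp (5 * L * T) := Real.exp_le_exp.mpr (by nlinarith)
  have hδp : ∀ p : ℕ, p ≤ N → (p:ℝ) * δ ≤ T := by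
    intro p hp
    calc (p:ℝ) * δ ≤ (N:ℝ) * δ := by
          have : (p:ℝ) ≤ (N:ℝ) := Nat.cast_le.mpr hp
          nlinarith
      _ ≤ T := hNδ
  have hvC₁ : ∀ p, p ≤ N → ∫ ω, ‖ξ p ω‖ ^ 2 ∂P ≤ C₁ := by
    intro p hp
    have h1 := hgron p hp
    have h2 : (1 + 4 * (δ * L)) ^ p ≤ Real.exp (5 * L * T) := by
      refine hexp_pow _ p (by positivity) ?_
      have := hδp p hp
      nlinarith
    have h3 : 3 * (δ * L) * p ≤ 3 * L * T := by
      have := hδp p hp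
      nlinarith
    calc ∫ ω, ‖ξ p ω‖ ^ 2 ∂P ≤ (C₀ + 3 * (δ * L) * p) * (1 + 4 * (δ * L)) ^ p := h1
      _ ≤ (C₀ + 3 * L * T) * Real.exp (5 * L * T) := by
          have hpow0 : (0:ℝ) ≤ (1 + 4 * (δ * L)) ^ p :=
            pow_nonneg (by nlinarith) p
          nlinarith [mul_le_mul_of_nonneg_left h2 (by positivity : (0:ℝ) ≤ C₀ + 3 * (δ * L) * p),
            mul_le_mul_of_nonneg_right h3 (Real.exp_pos (5 * L * T)).le]
    -- done uniform bound
  -- the u recursion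
  have hu : ∀ q, m ≤ q → q ≤ N →
      ∫ ω, ‖ξ q ω - ξ m ω‖ ^ 2 ∂P
        ≤ 3 * (δ * L) * (1 + C₁) * ((q:ℝ) - m) * (1 + δ * L) ^ (q - m) := by
    intro q hmq hqN
    induction q, hmq using Nat.le_induction with
    | base =>
      have : ∫ ω, ‖ξ m ω - ξ m ω‖ ^ 2 ∂P = 0 := by simp
      rw [this]; simp
    | succ p hmp ih =>
      have hpN : p < N := by omega
      have ihp := ih hpN.le
      have hXL2 : MemLp (fun ω => ξ p ω - ξ m ω) 2 P := (hmemξ p hpN.le).sub (hmemξ m (by omega))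
      have hXm : StronglyMeasurable[F p] (fun ω => ξ p ω - ξ m ω) :=
        (hSMξ p hpN.le).sub ((hSMξ m (by omega)).mono (F.mono hmp))
      have h1 : ∫ ω, ‖ξ (p+1) ω - ξ m ω‖ ^ 2 ∂P
          = ∫ ω, ‖(ξ p ω - ξ m ω) + α (p+1) ω‖ ^ 2 ∂P := by
        refine integral_congr_ae (Eventually.of_forall fun ω => ?_)
        show ‖ξ (p+1) ω - ξ m ω‖ ^ 2 = ‖(ξ p ω - ξ m ω) + α (p+1) ω‖ ^ 2
        have hv : ξ (p+1) ω - ξ m ω = (ξ p ω - ξ m ω) + α (p+1) ω := by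
          rw [hstep p hpN ω]; abel
        rw [hv]
      have h2 := onestep (P := P) (F.le p) hδL hXm hXL2
        (hαL2 (p+1) (by omega) (by omega)) (hmemξ p hpN.le) (hdr' p hpN) (hs2' p hpN)
      have hvp := hvC₁ p hpN.le
      have hB0 := integral_nonneg (μ := P) (f := fun ω => ‖ξ p ω - ξ m ω‖ ^ 2)
        (fun ω => sq_nonneg _)
      have hrec : ∫ ω, ‖ξ (p+1) ω - ξ m ω‖ ^ 2 ∂P
          ≤ (∫ ω, ‖ξ p ω - ξ m ω‖ ^ 2 ∂P) * (1 + δ * L) + 3 * (δ * L) * (1 + C₁) := by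
        rw [h1]
        calc ∫ ω, ‖(ξ p ω - ξ m ω) + α (p+1) ω‖ ^ 2 ∂P
            ≤ (∫ ω, ‖ξ p ω - ξ m ω‖ ^ 2 ∂P)
              + δ * L * ((∫ ω, ‖ξ p ω - ξ m ω‖ ^ 2 ∂P) + 3 + 3 * ∫ ω, ‖ξ p ω‖ ^ 2 ∂P) := h2
          _ ≤ (∫ ω, ‖ξ p ω - ξ m ω‖ ^ 2 ∂P) * (1 + δ * L) + 3 * (δ * L) * (1 + C₁) := by
              nlinarith
      have hpow1 : (1:ℝ) ≤ (1 + δ * L) ^ (p - m) := one_le_pow₀ (by nlinarith)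
      have hpow0 : (0:ℝ) ≤ (1 + δ * L) ^ (p - m) := by linarith
      have hcast : ((p:ℝ) - m) = ((p - m : ℕ) : ℝ) := by
        have : (m:ℝ) ≤ p := Nat.cast_le.mpr hmp
        push_cast [Nat.cast_sub hmp]; ring
      have hpm0 : (0:ℝ) ≤ (p:ℝ) - m := by
        have : (m:ℝ) ≤ p := Nat.cast_le.mpr hmp
        linarith
      have hsucc : p + 1 - m = (p - m) + 1 := by omega
      calc ∫ ω, ‖ξ (p+1) ω - ξ m ω‖ ^ 2 ∂P
          ≤ (∫ ω, ‖ξ p ω - ξ m ω‖ ^ 2 ∂P) * (1 + δ * L) + 3 * (δ * L) * (1 + C₁) := hrec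
        _ ≤ (3 * (δ * L) * (1 + C₁) * ((p:ℝ) - m) * (1 + δ * L) ^ (p - m)) * (1 + δ * L)
            + 3 * (δ * L) * (1 + C₁) := by nlinarith
        _ ≤ 3 * (δ * L) * (1 + C₁) * (((p:ℝ)+1) - m) * (1 + δ * L) ^ (p + 1 - m) := by
            rw [hsucc, pow_succ]
            nlinarith [mul_nonneg (by positivity : (0:ℝ) ≤ 3 * (δ * L) * (1 + C₁))
              (by nlinarith : (0:ℝ) ≤ (1 + δ * L) ^ (p - m) * (1 + δ * L) - 1)]
        _ = 3 * (δ * L) * (1 + C₁) * (((p+1:ℕ):ℝ) - m) * (1 + δ * L) ^ (p + 1 - m) := by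
            push_cast; ring
  -- conclude
  have humn := hu n hmn hnN
  have hfin : ∫ ω, ‖ξ n ω - ξ m ω‖ ^ 2 ∂P
      ≤ 3 * L * (1 + C₁) * Real.exp (L * T) * δ * ((n:ℝ) - m) := by
    have hpow : (1 + δ * L) ^ (n - m) ≤ Real.exp (5 * L * T) := by
      refine hexp_pow _ (n - m) (by positivity) ?_
      have h := hδp (n - m) (by omega)
      nlinarith
    -- better: (1+δL)^(n-m) ≤ exp(L*T)
    have hpow' : (1 + δ * L) ^ (n - m) ≤ Real.exp (L * T) := by
      calc (1 + δ * L) ^ (n - m) ≤ (Real.exp (δ * L)) ^ (n - m) := by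
            refine pow_le_pow_left₀ (by nlinarith) ?_ _
            linarith [Real.add_one_le_exp (δ * L)]
        _ = Real.exp ((n - m : ℕ) * (δ * L)) := by rw [← Real.exp_nat_mul]
        _ ≤ Real.exp (L * T) := by
            refine Real.exp_le_exp.mpr ?_
            have h := hδp (n - m) (by omega)
            nlinarith
    have hcast : ((n:ℝ) - m) = ((n - m : ℕ) : ℝ) := by
      push_cast [Nat.cast_sub hmn]; ring
    have hnm0 : (0:ℝ) ≤ (n:ℝ) - m := by
      have : (m:ℝ) ≤ n := Nat.cast_le.mpr hmn
      linarith
    calc ∫ ω, ‖ξ n ω - ξ m ω‖ ^ 2 ∂P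
        ≤ 3 * (δ * L) * (1 + C₁) * ((n:ℝ) - m) * (1 + δ * L) ^ (n - m) := humn
      _ ≤ 3 * L * (1 + C₁) * Real.exp (L * T) * δ * ((n:ℝ) - m) := by
          have h1 : 0 ≤ 3 * (δ * L) * (1 + C₁) * ((n:ℝ) - m) := by positivity
          nlinarith
  -- convert to lintegral
  have hdiffL2 : MemLp (fun ω => ξ n ω - ξ m ω) 2 P := (hmemξ n hnN).sub (hmemξ m (hmn.trans hnN))
  have hdiffsq : Integrable (fun ω => ‖ξ n ω - ξ m ω‖ ^ 2) P :=
    (memLp_two_iff_integrable_sq_norm hdiffL2.1).mp hdiffL2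
  have heq : (∫⁻ ω, ENNReal.ofReal (‖ξ n ω - ξ m ω‖ ^ 2) ∂P)
      = ENNReal.ofReal (∫ ω, ‖ξ n ω - ξ m ω‖ ^ 2 ∂P) :=
    (ofReal_integral_eq_lintegral_ofReal hdiffsq
      (Eventually.of_forall fun ω => sq_nonneg _)).symm
  rw [heq]
  exact ENNReal.ofReal_le_ofReal (by linarith [hfin])
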